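/- For all λ ≥ 0 and w ≤ 0, one has B(λ) - B(λ+w) ≥ B(0) - B(w) ≥ 0, where B(w) = w/(1-e^{-w}) (with B(0)=1). -/

import Mathlib

noncomputable def B : ℝ → ℝ := fun w => if w = 0 then 1 else w / (1 - Real.exp (-w))

lemma one_sub_exp_neg_ne {x : ℝ} (hx : x ≠ 0) : 1 - Real.exp (-x) ≠ 0 := by
  intro h
  have : Real.exp (-x) = 1 := by linarith
  rw [Real.exp_eq_one_iff] at this
  exact hx (by linarith)

lemma B_identity (x : ℝ) : B x = x + B (-x) := by
  rcases eq_or_ne x 0 with h | h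
  · simp [h]
  · have h' : -x ≠ 0 := neg_ne_zero.mpr h
    simp only [B, if_neg h, if_neg h', neg_neg]
    have d1 : 1 - Real.exp (-x) ≠ 0 := one_sub_exp_neg_ne h
    have d2 : 1 - Real.exp x ≠ 0 := by
      have := one_sub_exp_neg_ne h'
      simpa using this
    have hmul : Real.exp (-x) * Real.exp x = 1 := by
      rw [← Real.exp_add]; simp
    field_simp
    linear_combination (-1) * hmul

/-- sinh t ≤ t * cosh t for t ≥ 0 -/
lemma sinh_le_mul_cosh {t : ℝ} (ht : 0 ≤ t) : Real.sinh t ≤ t * Real.cosh t := by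
  have hmono : MonotoneOn (fun y => y * Real.cosh y - Real.sinh y) (Set.Ici (0:ℝ)) := by
    apply monotoneOn_of_deriv_nonneg (convex_Ici 0)
    · exact ((continuous_id.mul Real.continuous_cosh).sub Real.continuous_sinh).continuousOn
    · exact ((differentiable_id.mul Real.differentiable_cosh).sub
        Real.differentiable_sinh).differentiableOn
    · intro y hy
      rw [interior_Ici] at hy
      have hd : HasDerivAt (fun y => y * Real.cosh y - Real.sinh y)
          ((1 * Real.cosh y + y * Real.sinh y) - Real.cosh y) y :=
        ((hasDerivAt_id y).mul (Real.hasDerivAt_cosh y)).sub (Real.hasDerivAt_sinh y)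
      rw [hd.deriv]
      have hy' : (0:ℝ) < y := hy
      have : 0 ≤ Real.sinh y := Real.sinh_nonneg_iff.mpr hy'.le
      nlinarith
  have := hmono (Set.mem_Ici.mpr le_rfl) (Set.mem_Ici.mpr ht) ht
  simpa using this

noncomputable def phi : ℝ → ℝ := fun x => B x - x / 2

lemma phi_even (x : ℝ) : phi (-x) = phi x := by
  simp only [phi]
  have := B_identity x
  linarith

lemma phi_zero : phi 0 = 1 := by simp [phi, B]

noncomputable def g : ℝ → ℝ := fun x => x * (1 + Real.exp (-x)) / (1 - Real.exp (-x))

lemma phi_eq_g {x : ℝ} (hx : 0 < x) : phi x = g x / 2 := by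
  have d : 1 - Real.exp (-x) ≠ 0 := one_sub_exp_neg_ne hx.ne'
  simp only [phi, g, B, if_neg hx.ne']
  field_simp
  ring

lemma g_strictMono : StrictMonoOn g (Set.Ioi 0) := by
  apply strictMonoOn_of_deriv_pos (convex_Ioi 0)
  · apply ContinuousOn.div
    · exact (continuous_id.mul (continuous_const.add
        (Real.continuous_exp.comp continuous_neg))).continuousOn
    · exact (continuous_const.sub (Real.continuous_exp.comp continuous_neg)).continuousOn
    · intro x hx
      exact one_sub_exp_neg_ne (ne_of_gt (by simpa using hx))
  · intro x hx
    rw [interior_Ioi] at hx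
    have hx' : (0:ℝ) < x := hx
    have d : 1 - Real.exp (-x) ≠ 0 := one_sub_exp_neg_ne hx'.ne'
    have hexp : HasDerivAt (fun y : ℝ => Real.exp (-y)) (-Real.exp (-x)) x := by
      exact ((Real.hasDerivAt_exp (-x)).comp x ((hasDerivAt_id x).neg)).congr_deriv (by simp)
    have hN := (hasDerivAt_id x).mul ((hasDerivAt_const x 1).add hexp)
    have hD := (hasDerivAt_const x 1).sub hexp
    have hg : HasDerivAt g
        (((1 * (1 + Real.exp (-x)) + x * (0 + -Real.exp (-x))) * (1 - Real.exp (-x))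
          - x * (1 + Real.exp (-x)) * (0 - -Real.exp (-x))) / (1 - Real.exp (-x)) ^ 2) x :=
      hN.div hD d
    rw [hg.deriv]
    apply div_pos
    · have hsinh : x < Real.sinh x := Real.self_lt_sinh_iff.mpr hx'
      rw [Real.sinh_eq] at hsinh
      have hmul : Real.exp (-x) * Real.exp x = 1 := by rw [← Real.exp_add]; simp
      nlinarith [Real.exp_pos x, Real.exp_pos (-x)]
    · positivity

lemma phi_mono {a b : ℝ} (ha : 0 ≤ a) (hab : a ≤ b) : phi a ≤ phi b := by
  rcases eq_or_lt_of_le ha with h0 | h0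
  · rcases eq_or_lt_of_le hab with hb | hb
    · rw [hb]
    · have hbpos : 0 < b := by rw [← h0] at hb; exact hb
      rw [← h0, phi_zero, phi_eq_g hbpos]
      have d : 0 < 1 - Real.exp (-b) := by
        have h1 : Real.exp (-b) < 1 := by
          rw [Real.exp_lt_one_iff]; linarith
        linarith
      have key := sinh_le_mul_cosh (by linarith : (0:ℝ) ≤ b / 2)
      rw [Real.sinh_eq, Real.cosh_eq] at key
      have key' : Real.exp (b/2) - Real.exp (-(b/2)) ≤ (b/2) * (Real.exp (b/2) + Real.exp (-(b/2))) := by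
        have h2 : 0 ≤ b / 2 := by linarith
        nlinarith [key]
      have hmul : Real.exp (-(b/2)) * Real.exp (b/2) = 1 := by rw [← Real.exp_add]; simp
      have hsplit : Real.exp (-b) = Real.exp (-(b/2)) * Real.exp (-(b/2)) := by
        rw [← Real.exp_add]; ring_nf
      have hpos : (0:ℝ) < Real.exp (-(b/2)) := Real.exp_pos _
      rw [g, div_div, le_div_iff₀ (by positivity)]
      nlinarith [mul_le_mul_of_nonneg_left key' hpos.le, hmul, hsplit]
  · rcases eq_or_lt_of_le hab with hb | hb
    · rw [hb]
    · rw [phi_eq_g h0, phi_eq_g (h0.trans hb)]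
      have := g_strictMono (Set.mem_Ioi.mpr h0) (Set.mem_Ioi.mpr (h0.trans hb)) hb
      linarith

theorem B_shift_ineq_neg (lam w : ℝ) (hlam : 0 ≤ lam) (hw : w ≤ 0) :
    B 0 - B w ≤ B lam - B (lam + w) ∧ 0 ≤ B 0 - B w := by
  have hB0 : B 0 = 1 := by simp [B]
  have hBw : B w ≤ 1 := by
    rcases eq_or_lt_of_le hw with h | h
    · simp [h, B]
    · have hlt : (1:ℝ) < Real.exp (-w) := by
        have := Real.add_one_le_exp (-w)
        linarith
      have d : 1 - Real.exp (-w) < 0 := by linarith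
      simp only [B, if_neg h.ne]
      rw [div_le_iff_of_neg d]
      have := Real.add_one_le_exp (-w)
      linarith
  constructor
  · have key : 1 + phi (lam + w) ≤ phi lam + phi w := by
      rcases le_or_gt 0 (lam + w) with hc | hc
      · have h1 : phi (lam + w) ≤ phi lam := phi_mono hc (by linarith)
        have h2 : phi 0 ≤ phi (-w) := phi_mono (le_refl 0) (by linarith)
        rw [phi_even] at h2
        rw [phi_zero] at h2
        linarith
      · have h1 : phi (-(lam + w)) ≤ phi (-w) := phi_mono (by linarith) (by linarith)
        rw [phi_even, phi_even] at h1
        have h2 : phi 0 ≤ phi lam := phi_mono (le_refl 0) hlam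
        rw [phi_zero] at h2
        linarith
    simp only [phi] at key
    rw [hB0]
    linarith
  · rw [hB0]; linarith
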